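/- arXiv:1508.06961 — 4 statements merged into one kernel-verified Lean document; each statement's English description precedes it below -/
import Mathlib

section
/- Let G(p) be a formation in ℝᵈ (d ≥ 2, n ≥ 2) with at least one edge (so there exist i, j with p_i ≠ p_j). Then the rank of the bearing rigidity matrix R_B satisfies rank(R_B) ≤ dn − d − 1; equivalently, the null space of R_B has dimension at least d + 1. -/
open scoped InnerProductSpace

/-- The orthogonal projection matrix `P_x = I − x xᵀ/‖x‖²` onto the orthogonal
complement of a nonzero vector `x ∈ ℝᵈ`, as a linear map. -/
noncomputable def projP {d : ℕ} (x : EuclideanSpace ℝ (Fin d)) :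
    EuclideanSpace ℝ (Fin d) →ₗ[ℝ] EuclideanSpace ℝ (Fin d) :=
  LinearMap.id - (‖x‖ ^ 2)⁻¹ • ((innerSL ℝ x).toLinearMap.smulRight x)

/-- The linear map sending a configuration `x = (x_1, …, x_n)` to `x_j − x_i`. -/
noncomputable def relpos {d n : ℕ} (i j : Fin n) :
    (Fin n → EuclideanSpace ℝ (Fin d)) →ₗ[ℝ] EuclideanSpace ℝ (Fin d) :=
  LinearMap.proj (R := ℝ) (φ := fun _ : Fin n => EuclideanSpace ℝ (Fin d)) j -
    LinearMap.proj (R := ℝ) (φ := fun _ : Fin n => EuclideanSpace ℝ (Fin d)) i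

/-- The bearing `g_ij = (p_j − p_i)/‖p_j − p_i‖` of edge `(i, j)`. -/
noncomputable def bearing {d n : ℕ} (p : Fin n → EuclideanSpace ℝ (Fin d))
    (i j : Fin n) : EuclideanSpace ℝ (Fin d) :=
  ‖p j - p i‖⁻¹ • (p j - p i)

/-- The bearing rigidity matrix `R_B` of the formation `G(p)`: the linear map
`ℝ^{dn} → ℝ^{d|E|}` whose component for edge `(i,j) ∈ E` is
`(1/‖e_ij‖) P_{g_ij} (x_j − x_i)`. -/
noncomputable def RB {d n : ℕ} (E : Finset (Fin n × Fin n))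
    (p : Fin n → EuclideanSpace ℝ (Fin d)) :
    (Fin n → EuclideanSpace ℝ (Fin d)) →ₗ[ℝ] (↥E → EuclideanSpace ℝ (Fin d)) :=
  LinearMap.pi fun e =>
    ‖p e.1.2 - p e.1.1‖⁻¹ • (projP (bearing p e.1.1 e.1.2) ∘ₗ relpos e.1.1 e.1.2)

/-- The bearing Laplacian `L_B` of the formation `G(p)`: the linear map
`ℝ^{dn} → ℝ^{dn}` whose `i`-th `ℝᵈ`-block is `∑_{j : (i,j) ∈ E} P_{g_ij}(x_i − x_j)`. -/
noncomputable def LB {d n : ℕ} (E : Finset (Fin n × Fin n))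
    (p : Fin n → EuclideanSpace ℝ (Fin d)) :
    (Fin n → EuclideanSpace ℝ (Fin d)) →ₗ[ℝ] (Fin n → EuclideanSpace ℝ (Fin d)) :=
  LinearMap.pi fun i =>
    ∑ j ∈ Finset.univ.filter (fun j => (i, j) ∈ E),
      (projP (bearing p i j) ∘ₗ relpos j i)

/-- The subspace `span{𝟏 ⊗ I_d, p} = {c • p + (v, …, v) : c ∈ ℝ, v ∈ ℝᵈ}` of
translations and scalings of the configuration `p`. -/
def transScale {d n : ℕ} (p : Fin n → EuclideanSpace ℝ (Fin d)) :
    Set (Fin n → EuclideanSpace ℝ (Fin d)) :=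
  {x | ∃ (c : ℝ) (v : EuclideanSpace ℝ (Fin d)), x = c • p + fun _ => v}

lemma projP_self {d : ℕ} (x : EuclideanSpace ℝ (Fin d)) : projP x x = 0 := by
  by_cases hx : x = 0
  · simp [projP, hx]
  · simp only [projP, LinearMap.sub_apply, LinearMap.id_apply, LinearMap.smul_apply,
      LinearMap.smulRight_apply, ContinuousLinearMap.coe_coe, innerSL_apply_apply,
      real_inner_self_eq_norm_sq]
    rw [smul_smul, inv_mul_cancel₀ (pow_ne_zero _ (norm_ne_zero_iff.mpr hx))]
    simp

lemma projP_smul_self {d : ℕ} (x : EuclideanSpace ℝ (Fin d)) (c : ℝ) :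
    projP x (c • x) = 0 := by
  rw [map_smul, projP_self, smul_zero]

theorem stmt4' {d n : ℕ} (hd : 2 ≤ d) (hn : 2 ≤ n)
    (E : Finset (Fin n × Fin n)) (hE : E.Nonempty)
    (p : Fin n → EuclideanSpace ℝ (Fin d))
    (hloop : ∀ e ∈ E, e.1 ≠ e.2) (hsep : ∀ e ∈ E, p e.1 ≠ p e.2) :
    Module.finrank ℝ (LinearMap.range (RB E p)) ≤ d * n - d - 1 ∧
      d + 1 ≤ Module.finrank ℝ (LinearMap.ker (RB E p)) := by
  classical
  -- the constant map
  set cmap : EuclideanSpace ℝ (Fin d) →ₗ[ℝ] (Fin n → EuclideanSpace ℝ (Fin d)) :=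
    LinearMap.pi (fun _ => LinearMap.id) with hcmap
  have hcmap_apply : ∀ v i, cmap v i = v := fun v i => rfl
  have hninj : Function.Injective cmap := by
    intro v w h
    simpa [hcmap_apply] using congrFun h ⟨0, by omega⟩
  set C : Submodule ℝ (Fin n → EuclideanSpace ℝ (Fin d)) := LinearMap.range cmap with hC
  have hCrank : Module.finrank ℝ C = d := by
    rw [hC, LinearMap.finrank_range_of_inj hninj, finrank_euclideanSpace_fin]
  -- constants in ker
  have hCker : C ≤ LinearMap.ker (RB E p) := by
    rintro _ ⟨v, rfl⟩
    rw [LinearMap.mem_ker]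
    funext e
    simp [RB, relpos, hcmap_apply]
  -- p in ker
  have hpker : p ∈ LinearMap.ker (RB E p) := by
    rw [LinearMap.mem_ker]
    funext e
    have hne : p e.1.2 - p e.1.1 ≠ 0 := fun h =>
      hsep e.1 e.2 (sub_eq_zero.mp h).symm
    simp only [RB, LinearMap.pi_apply, LinearMap.smul_apply, LinearMap.comp_apply]
    have hrel : relpos (n := n) e.1.1 e.1.2 p = p e.1.2 - p e.1.1 := rfl
    rw [hrel]
    have : p e.1.2 - p e.1.1 = ‖p e.1.2 - p e.1.1‖ • bearing p e.1.1 e.1.2 := by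
      rw [bearing, smul_smul, mul_inv_cancel₀ (norm_ne_zero_iff.mpr hne), one_smul]
    rw [this, projP_smul_self, smul_zero]
    rfl
  -- p not in C
  have hpC : p ∉ C := by
    rintro ⟨v, hv⟩
    obtain ⟨e, he⟩ := hE
    exact hsep e he (by rw [← hv]; rfl)
  have hlt : C < C ⊔ Submodule.span ℝ {p} := by
    refine lt_of_le_of_ne le_sup_left ?_
    intro h
    exact hpC (h ▸ Submodule.mem_sup_right (Submodule.mem_span_singleton_self p))
  have hKle : C ⊔ Submodule.span ℝ {p} ≤ LinearMap.ker (RB E p) := by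
    refine sup_le hCker ?_
    rw [Submodule.span_le, Set.singleton_subset_iff]
    exact hpker
  have hker : d + 1 ≤ Module.finrank ℝ (LinearMap.ker (RB E p)) := by
    have h1 := Submodule.finrank_lt_finrank_of_lt hlt
    have h2 := Submodule.finrank_mono hKle
    omega
  refine ⟨?_, hker⟩
  have hrn := LinearMap.finrank_range_add_finrank_ker (RB E p)
  have hdom : Module.finrank ℝ (Fin n → EuclideanSpace ℝ (Fin d)) = n * d := by
    rw [Module.finrank_pi_fintype]
    simp [finrank_euclideanSpace_fin]
  rw [hdom] at hrn
  have : d * n = n * d := Nat.mul_comm d n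
  omega

/-- For a formation `G(p)` in `ℝᵈ` (`d ≥ 2`, `n ≥ 2`) with at least one edge,
`rank(R_B) ≤ dn − d − 1`; equivalently, `dim Null(R_B) ≥ d + 1`. -/
theorem stmt4 {d n : ℕ} (hd : 2 ≤ d) (hn : 2 ≤ n)
    (E : Finset (Fin n × Fin n)) (hE : E.Nonempty)
    (p : Fin n → EuclideanSpace ℝ (Fin d))
    (hloop : ∀ e ∈ E, e.1 ≠ e.2) (hsep : ∀ e ∈ E, p e.1 ≠ p e.2) :
    Module.finrank ℝ (LinearMap.range (RB E p)) ≤ d * n - d - 1 ∧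
      d + 1 ≤ Module.finrank ℝ (LinearMap.ker (RB E p)) := by
  exact stmt4' hd hn E hE p hloop hsep
end

section
/- Let G(p) be a formation in ℝᵈ and let p' = (p'_1,…,p'_n) ∈ ℝ^{dn} be another configuration with p'_i ≠ p'_j for every edge (i,j) ∈ E; write g'_ij := (p'_j − p'_i)/‖p'_j − p'_i‖. Then G(p) and G(p') are bearing equivalent (i.e., P_{g_ij} g'_ij = 0 for all (i,j) ∈ E) if and only if R_B(p) p' = 0, where R_B(p) is the bearing rigidity matrix of G(p). -/
open scoped InnerProductSpace

/-- `G(p)` and `G(p')` are bearing equivalent (`P_{g_ij} g'_ij = 0` for all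
`(i,j) ∈ E`) if and only if `R_B(p) p' = 0`. -/
theorem stmt5 {d n : ℕ} (hd : 2 ≤ d) (hn : 2 ≤ n)
    (E : Finset (Fin n × Fin n))
    (p p' : Fin n → EuclideanSpace ℝ (Fin d))
    (hloop : ∀ e ∈ E, e.1 ≠ e.2)
    (hsep : ∀ e ∈ E, p e.1 ≠ p e.2) (hsep' : ∀ e ∈ E, p' e.1 ≠ p' e.2) :
    (∀ e ∈ E, projP (bearing p e.1 e.2) (bearing p' e.1 e.2) = 0) ↔
      RB E p p' = 0 := by
  constructor
  · intro h
    funext e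
    have he := e.2
    have hnp' : (‖p' (e:Fin n × Fin n).2 - p' (e:Fin n × Fin n).1‖⁻¹ : ℝ) ≠ 0 := by
      simp [sub_eq_zero, (hsep' e he).symm]
    have h1 := h e he
    rw [show bearing p' (e:Fin n × Fin n).1 (e:Fin n × Fin n).2 =
        ‖p' (e:Fin n × Fin n).2 - p' (e:Fin n × Fin n).1‖⁻¹ •
        (p' (e:Fin n × Fin n).2 - p' (e:Fin n × Fin n).1) from rfl, map_smul] at h1
    have h2 := (smul_eq_zero.mp h1).resolve_left hnp'
    simp only [RB, LinearMap.pi_apply, LinearMap.smul_apply, LinearMap.comp_apply,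
      relpos, LinearMap.sub_apply, LinearMap.proj_apply, Pi.zero_apply]
    rw [h2, smul_zero]
  · intro h e he
    have hnp : ‖p e.2 - p e.1‖⁻¹ ≠ 0 := by
      simp [sub_eq_zero, (hsep e he).symm]
    have h1 := congrFun h ⟨e, he⟩
    simp only [RB, LinearMap.pi_apply, LinearMap.smul_apply, LinearMap.comp_apply,
      relpos, LinearMap.sub_apply, LinearMap.proj_apply, Pi.zero_apply] at h1
    have h2 := (smul_eq_zero.mp h1).resolve_left hnp
    rw [show bearing p' e.1 e.2 = ‖p' e.2 - p' e.1‖⁻¹ • (p' e.2 - p' e.1) from rfl,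
      map_smul, h2, smul_zero]
end

section
/- Let G(p) be an undirected formation in ℝᵈ, i.e., the edge set E is symmetric ((i,j) ∈ E ↔ (j,i) ∈ E). Then the bearing Laplacian L_B is symmetric (⟨x, L_B y⟩ = ⟨L_B x, y⟩ for all x, y ∈ ℝ^{dn}) and positive semi-definite (⟨x, L_B x⟩ ≥ 0 for all x ∈ ℝ^{dn}), and Null(L_B) = Null(R_B). -/
open scoped InnerProductSpace

section aux
variable {d n : ℕ}

lemma projP_apply' (g v : EuclideanSpace ℝ (Fin d)) :
    projP g v = v - ((‖g‖ ^ 2)⁻¹ * inner ℝ g v) • g := by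
  simp [projP, smul_smul]

lemma projP_inner (g u v : EuclideanSpace ℝ (Fin d)) :
    (inner ℝ u (projP g v) : ℝ) = inner ℝ (projP g u) v := by
  rw [projP_apply', projP_apply', inner_sub_right, inner_sub_left,
    real_inner_smul_right, real_inner_smul_left, real_inner_comm u g]
  ring

lemma projP_neg (g v : EuclideanSpace ℝ (Fin d)) : projP (-g) v = projP g v := by
  rw [projP_apply', projP_apply', norm_neg, inner_neg_left]
  module

lemma projP_idem (g : EuclideanSpace ℝ (Fin d)) (hg : ‖g‖ = 1)
    (v : EuclideanSpace ℝ (Fin d)) : projP g (projP g v) = projP g v := by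
  have h : (inner ℝ g (projP g v) : ℝ) = 0 := by
    rw [projP_apply', inner_sub_right, real_inner_smul_right,
      real_inner_self_eq_norm_sq, hg]
    ring
  rw [projP_apply' (v := projP g v), h]
  simp

lemma inner_projP_self (g : EuclideanSpace ℝ (Fin d)) (hg : ‖g‖ = 1)
    (v : EuclideanSpace ℝ (Fin d)) : (inner ℝ v (projP g v) : ℝ) = ‖projP g v‖ ^ 2 := by
  rw [← projP_idem g hg v, projP_inner, projP_idem g hg v, real_inner_self_eq_norm_sq]

lemma bearing_symm (p : Fin n → EuclideanSpace ℝ (Fin d)) (i j : Fin n) :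
    bearing p j i = -bearing p i j := by
  rw [bearing, bearing, norm_sub_rev, ← neg_sub (p j), smul_neg]

lemma norm_bearing (p : Fin n → EuclideanSpace ℝ (Fin d)) {i j : Fin n}
    (h : p i ≠ p j) : ‖bearing p i j‖ = 1 := by
  have h0 : p j - p i ≠ 0 := sub_ne_zero_of_ne (Ne.symm h)
  rw [bearing, norm_smul, norm_inv, norm_norm, inv_mul_cancel₀ (norm_ne_zero_iff.mpr h0)]

lemma sum_edges {M : Type*} [AddCommMonoid M] (E : Finset (Fin n × Fin n))
    (f : Fin n → Fin n → M) :
    ∑ i, ∑ j ∈ Finset.univ.filter (fun j => (i, j) ∈ E), f i j = ∑ e ∈ E, f e.1 e.2 := by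
  simp_rw [Finset.sum_filter]
  rw [← Finset.univ_inter E, ← Finset.sum_ite_mem, Fintype.sum_prod_type]
  simp

lemma sum_swap_E {M : Type*} [AddCommMonoid M] (E : Finset (Fin n × Fin n))
    (hsym : ∀ i j : Fin n, (i, j) ∈ E ↔ (j, i) ∈ E) (f : Fin n → Fin n → M) :
    ∑ e ∈ E, f e.1 e.2 = ∑ e ∈ E, f e.2 e.1 := by
  refine Finset.sum_nbij' (i := Prod.swap) (j := Prod.swap) ?_ ?_ ?_ ?_ ?_
  · intro a ha; exact (hsym a.1 a.2).mp ha
  · intro a ha; exact (hsym a.2 a.1).mpr ha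
  · intro a _; rfl
  · intro a _; rfl
  · intro a _; rfl

lemma relpos_apply (i j : Fin n) (x : Fin n → EuclideanSpace ℝ (Fin d)) :
    relpos i j x = x j - x i := rfl

lemma LB_apply (E : Finset (Fin n × Fin n)) (p x : Fin n → EuclideanSpace ℝ (Fin d))
    (i : Fin n) :
    LB E p x i = ∑ j ∈ Finset.univ.filter (fun j => (i, j) ∈ E),
      projP (bearing p i j) (x i - x j) := by
  simp [LB, LinearMap.pi_apply, LinearMap.sum_apply, relpos_apply]

lemma RB_apply (E : Finset (Fin n × Fin n)) (p x : Fin n → EuclideanSpace ℝ (Fin d))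
    (e : ↥E) :
    RB E p x e = ‖p e.1.2 - p e.1.1‖⁻¹ •
      projP (bearing p e.1.1 e.1.2) (x e.1.2 - x e.1.1) := by
  simp [RB, LinearMap.pi_apply, relpos_apply]

lemma inner_LB_eq (E : Finset (Fin n × Fin n))
    (hsym : ∀ i j : Fin n, (i, j) ∈ E ↔ (j, i) ∈ E)
    (p x y : Fin n → EuclideanSpace ℝ (Fin d)) :
    ∑ i, (inner ℝ (x i) (LB E p y i) : ℝ)
      = (1/2) * ∑ e ∈ E,
          (inner ℝ (x e.1 - x e.2) (projP (bearing p e.1 e.2) (y e.1 - y e.2)) : ℝ) := by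
  have h1 : ∑ i, (inner ℝ (x i) (LB E p y i) : ℝ)
      = ∑ e ∈ E, (inner ℝ (x e.1) (projP (bearing p e.1 e.2) (y e.1 - y e.2)) : ℝ) := by
    rw [← sum_edges E (fun i j => (inner ℝ (x i) (projP (bearing p i j) (y i - y j)) : ℝ))]
    refine Finset.sum_congr rfl fun i _ => ?_
    rw [LB_apply, inner_sum]
  have h2 : ∑ i, (inner ℝ (x i) (LB E p y i) : ℝ)
      = ∑ e ∈ E, -(inner ℝ (x e.2) (projP (bearing p e.1 e.2) (y e.1 - y e.2)) : ℝ) := by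
    rw [h1, sum_swap_E E hsym
      (fun a b => (inner ℝ (x a) (projP (bearing p a b) (y a - y b)) : ℝ))]
    refine Finset.sum_congr rfl fun e _ => ?_
    rw [bearing_symm, projP_neg, show y e.2 - y e.1 = -(y e.1 - y e.2) by abel,
      map_neg, inner_neg_right]
  have h3 : (2 : ℝ) * ∑ i, (inner ℝ (x i) (LB E p y i) : ℝ)
      = ∑ e ∈ E, (inner ℝ (x e.1 - x e.2) (projP (bearing p e.1 e.2) (y e.1 - y e.2)) : ℝ) := by
    rw [two_mul]
    nth_rewrite 1 [h1]
    rw [h2, ← Finset.sum_add_distrib]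
    refine Finset.sum_congr rfl fun e _ => ?_
    rw [inner_sub_left]
    ring
  linarith

end aux

/-- For an undirected formation (`E` symmetric), the bearing Laplacian `L_B` is
symmetric and positive semi-definite with respect to the standard inner ℝ product on
`ℝ^{dn}`, and `Null(L_B) = Null(R_B)`. -/
theorem stmt8 {d n : ℕ} (hd : 2 ≤ d) (hn : 2 ≤ n)
    (E : Finset (Fin n × Fin n))
    (hsym : ∀ i j : Fin n, (i, j) ∈ E ↔ (j, i) ∈ E)
    (p : Fin n → EuclideanSpace ℝ (Fin d))
    (hloop : ∀ e ∈ E, e.1 ≠ e.2) (hsep : ∀ e ∈ E, p e.1 ≠ p e.2) :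
    (∀ x y : Fin n → EuclideanSpace ℝ (Fin d),
        ∑ i, (inner ℝ (x i) (LB E p y i) : ℝ) = ∑ i, (inner ℝ (LB E p x i) (y i) : ℝ)) ∧
      (∀ x : Fin n → EuclideanSpace ℝ (Fin d),
        0 ≤ ∑ i, (inner ℝ (x i) (LB E p x i) : ℝ)) ∧
      LinearMap.ker (LB E p) = LinearMap.ker (RB E p) := by
  have quad : ∀ x : Fin n → EuclideanSpace ℝ (Fin d),
      ∑ i, (inner ℝ (x i) (LB E p x i) : ℝ)
        = (1/2) * ∑ e ∈ E, ‖projP (bearing p e.1 e.2) (x e.1 - x e.2)‖ ^ 2 := by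
    intro x
    rw [inner_LB_eq E hsym p x x]
    congr 1
    refine Finset.sum_congr rfl fun e he => ?_
    exact inner_projP_self _ (norm_bearing p (hsep e he)) _
  refine ⟨?_, ?_, ?_⟩
  · intro x y
    rw [inner_LB_eq E hsym p x y,
      show ∑ i, (inner ℝ (LB E p x i) (y i) : ℝ) = ∑ i, (inner ℝ (y i) (LB E p x i) : ℝ) from
        Finset.sum_congr rfl fun i _ => real_inner_comm _ _,
      inner_LB_eq E hsym p y x]
    congr 1
    refine Finset.sum_congr rfl fun e _ => ?_
    rw [projP_inner, real_inner_comm]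
  · intro x
    rw [quad x]
    positivity
  · ext x
    simp only [LinearMap.mem_ker]
    constructor
    · intro h
      have h0 : ∑ e ∈ E, ‖projP (bearing p e.1 e.2) (x e.1 - x e.2)‖ ^ 2 = 0 := by
        have hq := quad x
        rw [h] at hq
        simp only [Pi.zero_apply, inner_zero_right, Finset.sum_const_zero] at hq
        linarith
      have hz : ∀ e ∈ E, projP (bearing p e.1 e.2) (x e.1 - x e.2) = 0 := by
        intro e he
        have := (Finset.sum_eq_zero_iff_of_nonneg
          (fun e _ => sq_nonneg ‖projP (bearing p e.1 e.2) (x e.1 - x e.2)‖)).mp h0 e he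
        have hn0 : ‖projP (bearing p e.1 e.2) (x e.1 - x e.2)‖ = 0 := by
          nlinarith [norm_nonneg (projP (bearing p e.1 e.2) (x e.1 - x e.2))]
        exact norm_eq_zero.mp hn0
      funext e
      rw [RB_apply, show x e.1.2 - x e.1.1 = -(x e.1.1 - x e.1.2) by abel, map_neg,
        hz e.1 e.2]
      simp
    · intro h
      have hz : ∀ e ∈ E, projP (bearing p e.1 e.2) (x e.2 - x e.1) = 0 := by
        intro e he
        have := congrFun h ⟨e, he⟩
        rw [RB_apply] at this
        have hc : ‖p e.2 - p e.1‖⁻¹ ≠ 0 := by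
          have : p e.2 - p e.1 ≠ 0 := sub_ne_zero_of_ne (Ne.symm (hsep e he))
          simpa using norm_ne_zero_iff.mpr this
        simpa [smul_eq_zero, hc] using this
      funext i
      rw [LB_apply]
      refine Finset.sum_eq_zero fun j hj => ?_
      have hje : (i, j) ∈ E := (Finset.mem_filter.mp hj).2
      have := hz (i, j) hje
      rw [show x i - x j = -(x j - x i) by abel, map_neg, this, neg_zero]
end

section
/- Let G(p) be a directed formation in ℝ². Suppose that every vertex i has at most two outgoing edges, and whenever a vertex i has exactly two outgoing edges (i,k) and (i,ℓ), the bearings g_ik and g_iℓ are not collinear (i.e., g_iℓ is not a scalar multiple of g_ik). Then the formation is bearing persistent: Null(L_B) = Null(R_B). -/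
open scoped InnerProductSpace

lemma projP_orth {d : ℕ} (x : EuclideanSpace ℝ (Fin d)) (hx : x ≠ 0)
    (y : EuclideanSpace ℝ (Fin d)) : ⟪x, projP x y⟫_ℝ = 0 := by
  have hnx : ‖x‖ ^ 2 ≠ 0 := pow_ne_zero 2 (norm_ne_zero_iff.mpr hx)
  simp only [projP, LinearMap.sub_apply, LinearMap.id_apply, LinearMap.smul_apply,
    LinearMap.smulRight_apply, ContinuousLinearMap.coe_coe, innerSL_apply_apply,
    inner_sub_right, real_inner_smul_right, real_inner_self_eq_norm_sq]
  field_simp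
  ring

lemma key2 {g h u : EuclideanSpace ℝ (Fin 2)} (hg : g ≠ 0)
    (hnc : ¬∃ c : ℝ, h = c • g)
    (hug : ⟪g, u⟫_ℝ = 0) (huh : ⟪h, u⟫_ℝ = 0) : u = 0 := by
  have hLI : LinearIndependent ℝ ![h, g] := by
    rw [linearIndependent_fin2]
    exact ⟨by simpa using hg, fun a ha => hnc ⟨a, by simpa using ha.symm⟩⟩
  have h1 := (basisOfLinearIndependentOfCardEqFinrank hLI (by simp)).span_eq
  rw [coe_basisOfLinearIndependentOfCardEqFinrank] at h1
  rw [show Set.range ![h, g] = {h, g} by ext z; simp [Fin.exists_fin_two, or_comm]] at h1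
  obtain ⟨a, b, hab⟩ := Submodule.mem_span_pair.mp (h1 ▸ Submodule.mem_top (x := u))
  have huu : ⟪u, u⟫_ℝ = 0 := by
    have h2 := congrArg (fun w => ⟪w, u⟫_ℝ) hab
    rw [← h2, inner_add_left, real_inner_smul_left, real_inner_smul_left, hug, huh]
    ring
  exact inner_self_eq_zero.mp huu

lemma pair_zero {g h u v : EuclideanSpace ℝ (Fin 2)} (hg : g ≠ 0)
    (hnc : ¬∃ c : ℝ, h = c • g)
    (hug : ⟪g, u⟫_ℝ = 0) (hvh : ⟪h, v⟫_ℝ = 0) (hsum : u + v = 0) : u = 0 :=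
  key2 hg hnc hug (by
    rw [eq_neg_of_add_eq_zero_left hsum, inner_neg_right, hvh, neg_zero])

lemma bearing_ne_zero {d n : ℕ} (p : Fin n → EuclideanSpace ℝ (Fin d)) {i j : Fin n}
    (h : p i ≠ p j) : bearing p i j ≠ 0 := by
  have hs : p j - p i ≠ 0 := sub_ne_zero.mpr (Ne.symm h)
  exact smul_ne_zero (inv_ne_zero (norm_ne_zero_iff.mpr hs)) hs

/-- Sufficient condition for bearing persistence in `ℝ²`: if every vertex has at
most two outgoing edges, and whenever a vertex has two distinct outgoing edges
their bearings are not collinear, then `Null(L_B) = Null(R_B)`. -/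
theorem stmt13 {n : ℕ} (hn : 2 ≤ n)
    (E : Finset (Fin n × Fin n)) (p : Fin n → EuclideanSpace ℝ (Fin 2))
    (hloop : ∀ e ∈ E, e.1 ≠ e.2) (hsep : ∀ e ∈ E, p e.1 ≠ p e.2)
    (hout : ∀ i : Fin n, (E.filter (fun e => e.1 = i)).card ≤ 2)
    (hnc : ∀ i k l : Fin n, (i, k) ∈ E → (i, l) ∈ E → k ≠ l →
      ¬∃ c : ℝ, bearing p i l = c • bearing p i k) :
    LinearMap.ker (LB E p) = LinearMap.ker (RB E p) := by
  ext x
  simp only [LinearMap.mem_ker]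
  constructor
  · intro hL
    funext e
    obtain ⟨⟨i, j⟩, he⟩ := e
    simp only [RB, LinearMap.pi_apply, LinearMap.smul_apply, LinearMap.coe_comp,
      Function.comp_apply, relpos, LinearMap.sub_apply, LinearMap.proj_apply, Pi.zero_apply]
    suffices hz : projP (bearing p i j) (x j - x i) = 0 by rw [hz, smul_zero]
    have hLi := congrFun hL i
    simp only [LB, LinearMap.pi_apply, LinearMap.sum_apply, LinearMap.coe_comp,
      Function.comp_apply, relpos, LinearMap.sub_apply, LinearMap.proj_apply,
      Pi.zero_apply] at hLi
    have hjT : j ∈ Finset.univ.filter (fun k => (i, k) ∈ E) := by simp [he]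
    have hcard : (Finset.univ.filter (fun k => (i, k) ∈ E)).card ≤ 2 := by
      refine le_trans (Finset.card_le_card_of_injOn (fun k => (i, k)) ?_ ?_) (hout i)
      · intro k hk
        rw [Finset.mem_coe, Finset.mem_filter] at hk ⊢
        exact ⟨hk.2, rfl⟩
      · intro a _ b _ hab
        simpa using hab
    have hpos : 1 ≤ (Finset.univ.filter (fun k => (i, k) ∈ E)).card :=
      Finset.card_pos.mpr ⟨j, hjT⟩
    have key : projP (bearing p i j) (x i - x j) = 0 := by
      rcases (by omega : (Finset.univ.filter (fun k => (i, k) ∈ E)).card = 1 ∨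
          (Finset.univ.filter (fun k => (i, k) ∈ E)).card = 2) with hc | hc
      · obtain ⟨a, ha⟩ := Finset.card_eq_one.mp hc
        rw [ha, Finset.mem_singleton] at hjT
        rw [ha, Finset.sum_singleton, ← hjT] at hLi
        exact hLi
      · obtain ⟨a, b, hab, hT⟩ := Finset.card_eq_two.mp hc
        have haE : (i, a) ∈ E := by
          have : a ∈ Finset.univ.filter (fun k => (i, k) ∈ E) := by rw [hT]; simp
          simpa using this
        have hbE : (i, b) ∈ E := by
          have : b ∈ Finset.univ.filter (fun k => (i, k) ∈ E) := by rw [hT]; simp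
          simpa using this
        rw [hT, Finset.mem_insert, Finset.mem_singleton] at hjT
        rw [hT, Finset.sum_pair hab] at hLi
        have hga : bearing p i a ≠ 0 := bearing_ne_zero p (hsep (i, a) haE)
        have hgb : bearing p i b ≠ 0 := bearing_ne_zero p (hsep (i, b) hbE)
        rcases hjT with rfl | rfl
        · exact pair_zero hga (hnc i j b he hbE hab)
            (projP_orth _ hga _) (projP_orth _ hgb _) hLi
        · exact pair_zero hgb (hnc i j a he haE hab.symm)
            (projP_orth _ hgb _) (projP_orth _ hga _) (by rw [add_comm]; exact hLi)
    have hxx : x j - x i = -(x i - x j) := by abel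
    rw [hxx, map_neg, key, neg_zero]
  · intro hR
    funext i
    simp only [LB, LinearMap.pi_apply, LinearMap.sum_apply, LinearMap.coe_comp,
      Function.comp_apply, relpos, LinearMap.sub_apply, LinearMap.proj_apply, Pi.zero_apply]
    apply Finset.sum_eq_zero
    intro k hk
    rw [Finset.mem_filter] at hk
    have hE := hk.2
    have hRe := congrFun hR ⟨(i, k), hE⟩
    simp only [RB, LinearMap.pi_apply, LinearMap.smul_apply, LinearMap.coe_comp,
      Function.comp_apply, relpos, LinearMap.sub_apply, LinearMap.proj_apply,
      Pi.zero_apply] at hRe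
    have hnorm : ‖p k - p i‖⁻¹ ≠ 0 :=
      inv_ne_zero (norm_ne_zero_iff.mpr (sub_ne_zero.mpr (Ne.symm (hsep (i, k) hE))))
    have h0 : projP (bearing p i k) (x k - x i) = 0 := by
      rcases smul_eq_zero.mp hRe with h | h
      · exact absurd h hnorm
      · exact h
    have hxx : x i - x k = -(x k - x i) := by abel
    rw [hxx, map_neg, h0, neg_zero]
end
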